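/- Let Y be an integrable real-valued random variable whose distribution function F_Y is strictly increasing, and let τ ∈ (0,1). Then the τ-quantile q_τ = inf{t : F_Y(t) ≥ τ} is the unique minimizer of q ↦ E[ρ_τ(Y - q)]: for every q ≠ q_τ, E[ρ_τ(Y - q)] > E[ρ_τ(Y - q_τ)]. -/

import Mathlib

open MeasureTheory

open Filter Topology ENNReal

/-- The pinball loss function ρ_τ(y) = y·(τ - 1_{y ≤ 0}). -/
noncomputable def pinball (τ y : ℝ) : ℝ := y * (τ - if y ≤ 0 then 1 else 0)

lemma pinball_meas (τ : ℝ) : Measurable (pinball τ) := by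
  unfold pinball
  refine measurable_id.mul (measurable_const.sub ?_)
  exact Measurable.ite measurableSet_Iic measurable_const measurable_const

lemma pinball_abs_le {τ : ℝ} (h0 : 0 < τ) (h1 : τ < 1) (y : ℝ) : |pinball τ y| ≤ |y| := by
  unfold pinball
  rw [abs_mul]
  have h : |τ - if y ≤ 0 then (1:ℝ) else 0| ≤ 1 := by
    split_ifs <;> rw [abs_le] <;> constructor <;> linarith
  calc |y| * |τ - if y ≤ 0 then (1:ℝ) else 0| ≤ |y| * 1 :=
        mul_le_mul_of_nonneg_left h (abs_nonneg y)
    _ = |y| := mul_one _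

lemma integrable_pinball {Ω : Type*} [MeasurableSpace Ω] (μ : Measure Ω) [IsProbabilityMeasure μ]
    (Y : Ω → ℝ) (hY : Measurable Y) (hint : Integrable Y μ) {τ : ℝ} (h0 : 0 < τ) (h1 : τ < 1)
    (q : ℝ) : Integrable (fun ω => pinball τ (Y ω - q)) μ := by
  have h' : Integrable (fun ω => Y ω - q) μ := hint.sub (integrable_const q)
  refine h'.mono ((pinball_meas τ).comp (hY.sub measurable_const)).aestronglyMeasurable ?_
  filter_upwards with ω
  simpa [Real.norm_eq_abs] using pinball_abs_le h0 h1 (Y ω - q)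

lemma key_gt {τ a m b y : ℝ} (h0 : 0 < τ) (h1 : τ < 1) (ham : a < m) (hmb : m < b) :
    pinball τ (y - a) + (-(τ*(b-a)) + (m-a)*(if y ≤ a then (1:ℝ) else 0)
      + (b-m)*(if y ≤ m then (1:ℝ) else 0)) ≤ pinball τ (y - b) := by
  unfold pinball
  split_ifs <;> nlinarith

lemma key_lt {τ a m b y : ℝ} (h0 : 0 < τ) (h1 : τ < 1) (ham : a < m) (hmb : m < b) :
    pinball τ (y - b) + (τ*(b-a) - (m-a)*(if y ≤ m then (1:ℝ) else 0)
      - (b-m)*(if y < b then (1:ℝ) else 0)) ≤ pinball τ (y - a) := by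
  unfold pinball
  split_ifs <;> nlinarith

theorem quantile_unique_minimizer_pinball_risk
    {Ω : Type*} [MeasurableSpace Ω] (μ : Measure Ω) [IsProbabilityMeasure μ]
    (Y : Ω → ℝ) (hY : Measurable Y) (hint : Integrable Y μ)
    (τ : ℝ) (hτ : τ ∈ Set.Ioo (0:ℝ) 1)
    (F : ℝ → ℝ) (hF : F = fun t => (μ {ω | Y ω ≤ t}).toReal)
    (hmono : StrictMono F)
    (qτ : ℝ) (hq : qτ = sInf {t : ℝ | τ ≤ F t}) :
    ∀ q : ℝ, q ≠ qτ →
      ∫ ω, pinball τ (Y ω - qτ) ∂μ < ∫ ω, pinball τ (Y ω - q) ∂μ := by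
  obtain ⟨hτ0, hτ1⟩ := hτ
  have hFmono : Monotone F := hmono.monotone
  have measYle : ∀ c : ℝ, MeasurableSet {ω | Y ω ≤ c} := fun c => hY measurableSet_Iic
  have measYlt : ∀ c : ℝ, MeasurableSet {ω | Y ω < c} := fun c => hY measurableSet_Iio
  -- S nonempty
  have hne : Set.Nonempty {t : ℝ | τ ≤ F t} := by
    have hmon : Monotone (fun n : ℕ => {ω | Y ω ≤ (n:ℝ)}) := by
      intro i j hij ω hω
      simp only [Set.mem_setOf_eq] at *
      exact hω.trans (Nat.cast_le.mpr hij)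
    have hU : (⋃ n : ℕ, {ω | Y ω ≤ (n:ℝ)}) = Set.univ := by
      ext ω
      simp only [Set.mem_iUnion, Set.mem_setOf_eq, Set.mem_univ, iff_true]
      exact exists_nat_ge (Y ω)
    have hlim := tendsto_measure_iUnion_atTop (μ := μ) hmon
    rw [hU, measure_univ] at hlim
    have hlim' : Tendsto (fun n : ℕ => F (n:ℝ)) atTop (𝓝 1) := by
      have := (ENNReal.tendsto_toReal (by simp : (1:ℝ≥0∞) ≠ ⊤)).comp hlim
      simpa [hF, Function.comp_def] using this
    obtain ⟨n, hn⟩ := (hlim'.eventually (eventually_ge_nhds hτ1)).exists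
    exact ⟨(n:ℝ), hn⟩
  -- S bounded below
  have hbb : BddBelow {t : ℝ | τ ≤ F t} := by
    have hanti : Antitone (fun n : ℕ => {ω | Y ω ≤ -(n:ℝ)}) := by
      intro i j hij ω hω
      simp only [Set.mem_setOf_eq] at *
      have : (i:ℝ) ≤ (j:ℝ) := Nat.cast_le.mpr hij
      linarith
    have hI : (⋂ n : ℕ, {ω | Y ω ≤ -(n:ℝ)}) = ∅ := by
      ext ω
      simp only [Set.mem_iInter, Set.mem_setOf_eq, Set.mem_empty_iff_false, iff_false]
      intro h
      obtain ⟨n, hn⟩ := exists_nat_ge (-(Y ω) + 1)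
      have := h n
      linarith
    have hlim := tendsto_measure_iInter_atTop (μ := μ)
      (fun n => (measYle _).nullMeasurableSet) hanti ⟨0, measure_ne_top μ _⟩
    rw [hI, measure_empty] at hlim
    have hlim' : Tendsto (fun n : ℕ => F (-(n:ℝ))) atTop (𝓝 0) := by
      have := (ENNReal.tendsto_toReal (by simp : (0:ℝ≥0∞) ≠ ⊤)).comp hlim
      simpa [hF, Function.comp_def] using this
    obtain ⟨n, hn⟩ := (hlim'.eventually (eventually_lt_nhds hτ0)).exists
    refine ⟨-(n:ℝ), fun t ht => ?_⟩
    by_contra hc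
    push_neg at hc
    have := hFmono hc.le
    simp only [Set.mem_setOf_eq] at ht
    linarith
  -- F m < τ for m < qτ
  have hFlt : ∀ m : ℝ, m < qτ → F m < τ := by
    intro m hm
    by_contra hc
    push_neg at hc
    have : qτ ≤ m := hq ▸ csInf_le hbb hc
    linarith
  -- τ ≤ F qτ
  have hFq : τ ≤ F qτ := by
    have key : ∀ ε : ℝ, 0 < ε → τ ≤ F (qτ + ε) := by
      intro ε hε
      obtain ⟨t, htS, htlt⟩ := Real.lt_sInf_add_pos hne hε
      rw [← hq] at htlt
      exact le_trans htS (hFmono htlt.le)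
    have hanti : Antitone (fun n : ℕ => {ω | Y ω ≤ qτ + 1/((n:ℝ)+1)}) := by
      intro i j hij ω hω
      simp only [Set.mem_setOf_eq] at *
      have hij' : (i:ℝ) ≤ (j:ℝ) := Nat.cast_le.mpr hij
      have h1 : (0:ℝ) < (i:ℝ)+1 := by positivity
      have : (1:ℝ)/((j:ℝ)+1) ≤ 1/((i:ℝ)+1) := by
        apply one_div_le_one_div_of_le h1; linarith
      linarith
    have hI : (⋂ n : ℕ, {ω | Y ω ≤ qτ + 1/((n:ℝ)+1)}) = {ω | Y ω ≤ qτ} := by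
      ext ω
      simp only [Set.mem_iInter, Set.mem_setOf_eq]
      constructor
      · intro h
        by_contra hc
        push_neg at hc
        obtain ⟨n, hn⟩ := exists_nat_one_div_lt (sub_pos.mpr hc)
        have := h n
        linarith
      · intro h n
        have : (0:ℝ) < 1/((n:ℝ)+1) := by positivity
        linarith
    have hlim := tendsto_measure_iInter_atTop (μ := μ)
      (fun n => (measYle _).nullMeasurableSet) hanti ⟨0, measure_ne_top μ _⟩
    rw [hI] at hlim
    have hlim' : Tendsto (fun n : ℕ => F (qτ + 1/((n:ℝ)+1))) atTop (𝓝 (F qτ)) := by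
      have := (ENNReal.tendsto_toReal (measure_ne_top μ _)).comp hlim
      simpa [hF, Function.comp_def] using this
    exact ge_of_tendsto' hlim' fun n => key _ (by positivity)
  -- μ (Y < qτ) ≤ τ
  have hμlt : (μ {ω | Y ω < qτ}).toReal ≤ τ := by
    have hmon : Monotone (fun n : ℕ => {ω | Y ω ≤ qτ - 1/((n:ℝ)+1)}) := by
      intro i j hij ω hω
      simp only [Set.mem_setOf_eq] at *
      have hij' : (i:ℝ) ≤ (j:ℝ) := Nat.cast_le.mpr hij
      have h1 : (0:ℝ) < (i:ℝ)+1 := by positivity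
      have : (1:ℝ)/((j:ℝ)+1) ≤ 1/((i:ℝ)+1) := by
        apply one_div_le_one_div_of_le h1; linarith
      linarith
    have hU : (⋃ n : ℕ, {ω | Y ω ≤ qτ - 1/((n:ℝ)+1)}) = {ω | Y ω < qτ} := by
      ext ω
      simp only [Set.mem_iUnion, Set.mem_setOf_eq]
      constructor
      · rintro ⟨n, hn⟩
        have : (0:ℝ) < 1/((n:ℝ)+1) := by positivity
        linarith
      · intro h
        obtain ⟨n, hn⟩ := exists_nat_one_div_lt (sub_pos.mpr h)
        exact ⟨n, by linarith⟩
    have hlim := tendsto_measure_iUnion_atTop (μ := μ) hmon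
    rw [hU] at hlim
    have hlim' : Tendsto (fun n : ℕ => F (qτ - 1/((n:ℝ)+1))) atTop
        (𝓝 ((μ {ω | Y ω < qτ}).toReal)) := by
      have := (ENNReal.tendsto_toReal (measure_ne_top μ _)).comp hlim
      simpa [hF, Function.comp_def] using this
    refine le_of_tendsto' hlim' fun n => ?_
    have : qτ - 1/((n:ℝ)+1) < qτ := by
      have : (0:ℝ) < 1/((n:ℝ)+1) := by positivity
      linarith
    exact (hFlt _ this).le
  -- indicator integrals
  have Iind : ∀ c : ℝ, Integrable (fun ω => if Y ω ≤ c then (1:ℝ) else 0) μ := by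
    intro c
    have heq : (fun ω => if Y ω ≤ c then (1:ℝ) else 0)
        = Set.indicator {ω | Y ω ≤ c} (fun _ => 1) := by
      ext ω; simp [Set.indicator_apply, Set.mem_setOf_eq]
    rw [heq]
    exact (integrable_const 1).indicator (measYle c)
  have Eind : ∀ c : ℝ, ∫ ω, (if Y ω ≤ c then (1:ℝ) else 0) ∂μ = F c := by
    intro c
    have heq : (fun ω => if Y ω ≤ c then (1:ℝ) else 0)
        = Set.indicator {ω | Y ω ≤ c} (fun _ => 1) := by
      ext ω; simp [Set.indicator_apply, Set.mem_setOf_eq]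
    rw [heq, integral_indicator_const (1:ℝ) (measYle c), hF]
    simp [Measure.real]
  have Iind' : Integrable (fun ω => if Y ω < qτ then (1:ℝ) else 0) μ := by
    have heq : (fun ω => if Y ω < qτ then (1:ℝ) else 0)
        = Set.indicator {ω | Y ω < qτ} (fun _ => 1) := by
      ext ω; simp [Set.indicator_apply, Set.mem_setOf_eq]
    rw [heq]
    exact (integrable_const 1).indicator (measYlt qτ)
  have Eind' : ∫ ω, (if Y ω < qτ then (1:ℝ) else 0) ∂μ = (μ {ω | Y ω < qτ}).toReal := by
    have heq : (fun ω => if Y ω < qτ then (1:ℝ) else 0)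
        = Set.indicator {ω | Y ω < qτ} (fun _ => 1) := by
      ext ω; simp [Set.indicator_apply, Set.mem_setOf_eq]
    rw [heq, integral_indicator_const (1:ℝ) (measYlt qτ)]
    simp [Measure.real]
  have ipin : ∀ c : ℝ, Integrable (fun ω => pinball τ (Y ω - c)) μ :=
    fun c => integrable_pinball μ Y hY hint hτ0 hτ1 c
  intro q hqne
  rcases lt_or_gt_of_ne hqne with hlt | hgt
  · -- q < qτ
    set m := (q + qτ)/2 with hm
    have ham : q < m := by rw [hm]; linarith
    have hmb : m < qτ := by rw [hm]; linarith
    have hFm : F m < τ := hFlt m hmb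
    set C : Ω → ℝ := fun ω => τ*(qτ-q) - (m-q)*(if Y ω ≤ m then (1:ℝ) else 0)
      - (qτ-m)*(if Y ω < qτ then (1:ℝ) else 0) with hC
    have i1 : Integrable (fun ω => (m-q)*(if Y ω ≤ m then (1:ℝ) else 0)) μ := (Iind m).const_mul _
    have i2 : Integrable (fun ω => (qτ-m)*(if Y ω < qτ then (1:ℝ) else 0)) μ := Iind'.const_mul _
    have i0 : Integrable (fun ω => τ*(qτ-q) - (m-q)*(if Y ω ≤ m then (1:ℝ) else 0)) μ :=
      (integrable_const _).sub i1
    have intC : Integrable C μ := i0.sub i2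
    have hCint : ∫ ω, C ω ∂μ
        = τ*(qτ-q) - (m-q)*(F m) - (qτ-m)*(μ {ω | Y ω < qτ}).toReal := by
      simp only [hC]
      rw [integral_sub i0 i2, integral_sub (integrable_const _) i1,
        integral_const, integral_const_mul, integral_const_mul, Eind, Eind']
      simp
    have hpt : ∀ ω, pinball τ (Y ω - qτ) + C ω ≤ pinball τ (Y ω - q) :=
      fun ω => key_lt hτ0 hτ1 ham hmb
    have h1 : ∫ ω, (pinball τ (Y ω - qτ) + C ω) ∂μ ≤ ∫ ω, pinball τ (Y ω - q) ∂μ :=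
      integral_mono ((ipin qτ).add intC) (ipin q) hpt
    rw [integral_add (ipin qτ) intC] at h1
    have hpos : 0 < ∫ ω, C ω ∂μ := by
      rw [hCint]
      nlinarith [mul_pos (sub_pos.mpr ham) (sub_pos.mpr hFm),
        mul_nonneg (sub_nonneg.mpr hmb.le) (sub_nonneg.mpr hμlt)]
    linarith
  · -- qτ < q
    set m := (qτ + q)/2 with hm
    have ham : qτ < m := by rw [hm]; linarith
    have hmb : m < q := by rw [hm]; linarith
    have hFm : τ < F m := lt_of_le_of_lt hFq (hmono ham)
    set C : Ω → ℝ := fun ω => -(τ*(q-qτ)) + (m-qτ)*(if Y ω ≤ qτ then (1:ℝ) else 0)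
      + (q-m)*(if Y ω ≤ m then (1:ℝ) else 0) with hC
    have i1 : Integrable (fun ω => (m-qτ)*(if Y ω ≤ qτ then (1:ℝ) else 0)) μ := (Iind qτ).const_mul _
    have i2 : Integrable (fun ω => (q-m)*(if Y ω ≤ m then (1:ℝ) else 0)) μ := (Iind m).const_mul _
    have i0 : Integrable (fun ω => -(τ*(q-qτ)) + (m-qτ)*(if Y ω ≤ qτ then (1:ℝ) else 0)) μ :=
      (integrable_const _).add i1
    have intC : Integrable C μ := i0.add i2
    have hCint : ∫ ω, C ω ∂μ = -(τ*(q-qτ)) + (m-qτ)*(F qτ) + (q-m)*(F m) := by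
      simp only [hC]
      rw [integral_add i0 i2, integral_add (integrable_const _) i1,
        integral_const, integral_const_mul, integral_const_mul, Eind, Eind]
      simp
    have hpt : ∀ ω, pinball τ (Y ω - qτ) + C ω ≤ pinball τ (Y ω - q) :=
      fun ω => key_gt hτ0 hτ1 ham hmb
    have h1 : ∫ ω, (pinball τ (Y ω - qτ) + C ω) ∂μ ≤ ∫ ω, pinball τ (Y ω - q) ∂μ :=
      integral_mono ((ipin qτ).add intC) (ipin q) hpt
    rw [integral_add (ipin qτ) intC] at h1
    have hpos : 0 < ∫ ω, C ω ∂μ := by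
      rw [hCint]
      nlinarith [mul_pos (sub_pos.mpr hmb) (sub_pos.mpr hFm),
        mul_nonneg (sub_nonneg.mpr ham.le) (sub_nonneg.mpr hFq)]
    linarith
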